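/- For any grid function v ∈ V_h^0, the discrete inner product satisfies (δ_x² δ_y² v, Λ_h v) ≤ 0. -/

import Mathlib

open Finset

noncomputable section

/-- A grid function on the `(M_x+1) × (M_y+1)` grid, represented as a total function
(only the values at indices `0 ≤ i ≤ M_x`, `0 ≤ j ≤ M_y` are relevant). -/
abbrev GridFn : Type := ℕ → ℕ → ℝ

/-- Spatial stepsize `h_x = 1/M_x`. -/
def hx (Mx : ℕ) : ℝ := ((Mx : ℝ))⁻¹

/-- Spatial stepsize `h_y = 1/M_y`. -/
def hy (My : ℕ) : ℝ := ((My : ℝ))⁻¹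

/-- Second-order difference in the x-direction:
`δ_x² v_{i,j} = (v_{i+1,j} − 2v_{i,j} + v_{i−1,j})/h_x²` (used for `1 ≤ i ≤ M_x−1`). -/
def dxx (Mx : ℕ) (v : GridFn) : GridFn := fun i j =>
  (v (i + 1) j - 2 * v i j + v (i - 1) j) / (hx Mx) ^ 2

/-- Second-order difference in the y-direction. -/
def dyy (My : ℕ) (v : GridFn) : GridFn := fun i j =>
  (v i (j + 1) - 2 * v i j + v i (j - 1)) / (hy My) ^ 2

/-- Compact operator `H_x`: `H_x v_{i,j} = v_{i,j} + (h_x²/12) δ_x² v_{i,j}` for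
`1 ≤ i ≤ M_x−1`, and `H_x v_{i,j} = v_{i,j}` for `i ∈ {0, M_x}`. -/
def Hcx (Mx : ℕ) (v : GridFn) : GridFn := fun i j =>
  if 1 ≤ i ∧ i ≤ Mx - 1 then v i j + (hx Mx) ^ 2 / 12 * dxx Mx v i j else v i j

/-- Compact operator `H_y`. -/
def Hcy (My : ℕ) (v : GridFn) : GridFn := fun i j =>
  if 1 ≤ j ∧ j ≤ My - 1 then v i j + (hy My) ^ 2 / 12 * dyy My v i j else v i j

/-- Compact operator `H_h = H_x H_y`. -/
def Hch (Mx My : ℕ) (v : GridFn) : GridFn := Hcx Mx (Hcy My v)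

/-- `Λ_h v = H_y(δ_x² v) + H_x(δ_y² v)` (at interior indices). -/
def Lamh (Mx My : ℕ) (v : GridFn) : GridFn := fun i j =>
  Hcy My (dxx Mx v) i j + Hcx Mx (dyy My v) i j

/-- Discrete L² inner product
`(v,w) = h_x h_y Σ_{i=1}^{M_x−1} Σ_{j=1}^{M_y−1} v_{i,j} w_{i,j}`. -/
def innp (Mx My : ℕ) (v w : GridFn) : ℝ :=
  hx Mx * hy My * ∑ i ∈ Icc 1 (Mx - 1), ∑ j ∈ Icc 1 (My - 1), v i j * w i j

/-- Discrete L² norm `‖v‖ = (v,v)^{1/2}`. -/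
def nrm (Mx My : ℕ) (v : GridFn) : ℝ := Real.sqrt (innp Mx My v v)

/-- Discrete maximum norm `‖v‖_∞ = max_{1≤i≤M_x−1, 1≤j≤M_y−1} |v_{i,j}|`. -/
def nrmInf (Mx My : ℕ) (v : GridFn) : ℝ :=
  ((Icc 1 (Mx - 1)) ×ˢ (Icc 1 (My - 1))).fold max 0 fun p => |v p.1 p.2|

/-- `‖δ_x v‖_x² = h_x h_y Σ_{i=1}^{M_x} Σ_{j=1}^{M_y−1} (δ_x v_{i−1/2,j})²`. -/
def nrmX2 (Mx My : ℕ) (v : GridFn) : ℝ :=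
  hx Mx * hy My * ∑ i ∈ Icc 1 Mx, ∑ j ∈ Icc 1 (My - 1),
    ((v i j - v (i - 1) j) / hx Mx) ^ 2

/-- `‖δ_y v‖_y² = h_x h_y Σ_{i=1}^{M_x−1} Σ_{j=1}^{M_y} (δ_y v_{i,j−1/2})²`. -/
def nrmY2 (Mx My : ℕ) (v : GridFn) : ℝ :=
  hx Mx * hy My * ∑ i ∈ Icc 1 (Mx - 1), ∑ j ∈ Icc 1 My,
    ((v i j - v i (j - 1)) / hy My) ^ 2

/-- Membership in `V_h^0`: a grid function vanishing on the boundary of the grid. -/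
def BZero (Mx My : ℕ) (v : GridFn) : Prop :=
  ∀ i ≤ Mx, ∀ j ≤ My, (i = 0 ∨ i = Mx ∨ j = 0 ∨ j = My) → v i j = 0

/-- Interior grid indices: `1 ≤ i ≤ M_x−1`, `1 ≤ j ≤ M_y−1`. -/
def interiorIdx (Mx My i j : ℕ) : Prop :=
  1 ≤ i ∧ i ≤ Mx - 1 ∧ 1 ≤ j ∧ j ≤ My - 1

/-- Time average `w̄^{n−1/2} = (w^n + w^{n−1})/2` of a sequence of grid functions. -/
def tbar (u : ℕ → GridFn) (n : ℕ) : GridFn := fun i j => (u n i j + u (n - 1) i j) / 2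

/-- Time difference `δ_t w^{n−1/2} = (w^n − w^{n−1})/τ` of a sequence of grid functions. -/
def tdiff (τ : ℝ) (u : ℕ → GridFn) (n : ℕ) : GridFn := fun i j =>
  (u n i j - u (n - 1) i j) / τ

/-- Extrapolation `l^{*,1} = l⁰`, `l^{*,n} = (3 l^{n−1} − l^{n−2})/2` for `n ≥ 2`. -/
def extrap (u : ℕ → GridFn) (n : ℕ) : GridFn :=
  if n = 1 then u 0 else fun i j => (3 * u (n - 1) i j - u (n - 2) i j) / 2

lemma sbp (N : ℕ) (g : ℕ → ℝ) :
    ∑ j ∈ Icc 1 N, (g (j+1) - 2*g j + g (j-1)) * g j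
      + ∑ j ∈ Icc 1 (N+1), (g j - g (j-1))^2
    = (g (N+1) - g N) * g (N+1) - (g 1 - g 0) * g 0 := by
  induction N with
  | zero => simp; ring
  | succ n ih =>
    rw [Finset.sum_Icc_succ_top (by omega : 1 ≤ n+1),
        Finset.sum_Icc_succ_top (by omega : 1 ≤ n+1+1)]
    simp only [Nat.add_sub_cancel]
    linear_combination ih

lemma sbp2 (N : ℕ) (g : ℕ → ℝ) :
    ∑ j ∈ Icc 1 N, (g (j+1) - 2*g j + g (j-1))^2
    ≤ 4 * ∑ j ∈ Icc 1 (N+1), (g j - g (j-1))^2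
      - 2*(g 1 - g 0)^2 - 2*(g (N+1) - g N)^2 := by
  induction N with
  | zero => simp; nlinarith [sq_nonneg (g 1 - g 0)]
  | succ n ih =>
    rw [Finset.sum_Icc_succ_top (by omega : 1 ≤ n+1),
        Finset.sum_Icc_succ_top (by omega : 1 ≤ n+1+1)]
    simp only [Nat.add_sub_cancel]
    nlinarith [ih, sq_nonneg ((g (n+1+1) - g (n+1)) + (g (n+1) - g n))]

lemma oned (M : ℕ) (hM : 1 ≤ M) (h : ℝ) (g : ℕ → ℝ) (h0 : g 0 = 0) (hMg : g M = 0) :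
    ∑ j ∈ Icc 1 (M-1),
      ((g (j+1) - 2*g j + g (j-1))/h^2)
        * (g j + h^2/12 * ((g (j+1) - 2*g j + g (j-1))/h^2)) ≤ 0 := by
  obtain ⟨N, rfl⟩ : ∃ N, M = N + 1 := ⟨M-1, by omega⟩
  simp only [Nat.add_sub_cancel] at *
  rcases eq_or_ne h 0 with rfl | hh
  · simp
  · have hsq : (0:ℝ) < h^2 := by positivity
    have key : ∑ j ∈ Icc 1 N,
        ((g (j+1) - 2*g j + g (j-1))/h^2)
          * (g j + h^2/12 * ((g (j+1) - 2*g j + g (j-1))/h^2))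
        = (12 * (∑ j ∈ Icc 1 N, (g (j+1) - 2*g j + g (j-1)) * g j)
            + ∑ j ∈ Icc 1 N, (g (j+1) - 2*g j + g (j-1))^2) / (12 * h^2) := by
      calc ∑ j ∈ Icc 1 N,
            ((g (j+1) - 2*g j + g (j-1))/h^2)
              * (g j + h^2/12 * ((g (j+1) - 2*g j + g (j-1))/h^2))
          = ∑ j ∈ Icc 1 N,
              (12 * ((g (j+1) - 2*g j + g (j-1)) * g j)
                + (g (j+1) - 2*g j + g (j-1))^2) / (12 * h^2) := by
            refine Finset.sum_congr rfl fun j _ => ?_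
            field_simp
        _ = (∑ j ∈ Icc 1 N,
              (12 * ((g (j+1) - 2*g j + g (j-1)) * g j)
                + (g (j+1) - 2*g j + g (j-1))^2)) / (12 * h^2) := by
            rw [Finset.sum_div]
        _ = _ := by rw [Finset.sum_add_distrib, Finset.mul_sum]
    rw [key]
    apply div_nonpos_of_nonpos_of_nonneg _ (by positivity)
    have h1 := sbp N g
    have h2 := sbp2 N g
    have hD : (0:ℝ) ≤ ∑ j ∈ Icc 1 (N+1), (g j - g (j-1))^2 :=
      Finset.sum_nonneg fun j _ => sq_nonneg _
    rw [h0, hMg] at h1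
    nlinarith [sq_nonneg (g 1 - g 0), sq_nonneg (g (N+1) - g N)]

lemma dxy_comm (Mx My : ℕ) (v : GridFn) (i j : ℕ) :
    dxx Mx (dyy My v) i j = dyy My (dxx Mx v) i j := by
  unfold dxx dyy
  ring

/-- For any `v ∈ V_h^0`, `(δ_x² δ_y² v, Λ_h v) ≤ 0`. -/
theorem stmt10 (Mx My : ℕ) (hMx : 2 ≤ Mx) (hMy : 2 ≤ My) (v : GridFn)
    (hv : BZero Mx My v) :
    innp Mx My (dxx Mx (dyy My v)) (Lamh Mx My v) ≤ 0 := by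
  have hxnn : (0:ℝ) ≤ hx Mx := by unfold hx; positivity
  have hynn : (0:ℝ) ≤ hy My := by unfold hy; positivity
  unfold innp Lamh
  have split : ∀ i j : ℕ,
      dxx Mx (dyy My v) i j * (Hcy My (dxx Mx v) i j + Hcx Mx (dyy My v) i j)
      = dxx Mx (dyy My v) i j * Hcy My (dxx Mx v) i j
        + dxx Mx (dyy My v) i j * Hcx Mx (dyy My v) i j := fun i j => by ring
  simp only [split, Finset.sum_add_distrib]
  have SA : ∑ i ∈ Icc 1 (Mx-1), ∑ j ∈ Icc 1 (My-1),
      dxx Mx (dyy My v) i j * Hcy My (dxx Mx v) i j ≤ 0 := by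
    apply Finset.sum_nonpos
    intro i hi
    rw [Finset.mem_Icc] at hi
    have hcong : ∀ j ∈ Icc 1 (My-1),
        dxx Mx (dyy My v) i j * Hcy My (dxx Mx v) i j
        = ((dxx Mx v i (j+1) - 2 * dxx Mx v i j + dxx Mx v i (j-1))/(hy My)^2)
          * (dxx Mx v i j + (hy My)^2/12
              * ((dxx Mx v i (j+1) - 2 * dxx Mx v i j + dxx Mx v i (j-1))/(hy My)^2)) := by
      intro j hj
      rw [Finset.mem_Icc] at hj
      rw [dxy_comm]
      unfold Hcy
      rw [if_pos hj]
      unfold dyy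
      rfl
    rw [Finset.sum_congr rfl hcong]
    apply oned My (by omega) (hy My) (fun j => dxx Mx v i j)
    · show dxx Mx v i 0 = 0
      unfold dxx
      rw [hv (i+1) (by omega) 0 (by omega) (by omega),
          hv i (by omega) 0 (by omega) (by omega),
          hv (i-1) (by omega) 0 (by omega) (by omega)]
      ring
    · show dxx Mx v i My = 0
      unfold dxx
      rw [hv (i+1) (by omega) My (by omega) (by omega),
          hv i (by omega) My (by omega) (by omega),
          hv (i-1) (by omega) My (by omega) (by omega)]
      ring
  have SB : ∑ i ∈ Icc 1 (Mx-1), ∑ j ∈ Icc 1 (My-1),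
      dxx Mx (dyy My v) i j * Hcx Mx (dyy My v) i j ≤ 0 := by
    rw [Finset.sum_comm]
    apply Finset.sum_nonpos
    intro j hj
    rw [Finset.mem_Icc] at hj
    have hcong : ∀ i ∈ Icc 1 (Mx-1),
        dxx Mx (dyy My v) i j * Hcx Mx (dyy My v) i j
        = ((dyy My v (i+1) j - 2 * dyy My v i j + dyy My v (i-1) j)/(hx Mx)^2)
          * (dyy My v i j + (hx Mx)^2/12
              * ((dyy My v (i+1) j - 2 * dyy My v i j + dyy My v (i-1) j)/(hx Mx)^2)) := by
      intro i hi
      rw [Finset.mem_Icc] at hi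
      unfold Hcx
      rw [if_pos hi]
      unfold dxx
      rfl
    rw [Finset.sum_congr rfl hcong]
    apply oned Mx (by omega) (hx Mx) (fun i => dyy My v i j)
    · show dyy My v 0 j = 0
      unfold dyy
      rw [hv 0 (by omega) (j+1) (by omega) (by omega),
          hv 0 (by omega) j (by omega) (by omega),
          hv 0 (by omega) (j-1) (by omega) (by omega)]
      ring
    · show dyy My v Mx j = 0
      unfold dyy
      rw [hv Mx (by omega) (j+1) (by omega) (by omega),
          hv Mx (by omega) j (by omega) (by omega),
          hv Mx (by omega) (j-1) (by omega) (by omega)]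
      ring
  exact mul_nonpos_of_nonneg_of_nonpos (by positivity) (by linarith)
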